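/- arXiv:2512.08055 — 3 statements merged into one kernel-verified Lean document; each statement's English description precedes it below -/
import Mathlib

section
/- The fairness-loss function L(P) = (1/K) Σₖ (1ₖᵀ p(P) − φₖ)², where p(P) is the PageRank vector as a function of the row-stochastic transition matrix P, is not a convex function of P on the set of row-stochastic matrices. Concretely, for n = 3, γ ∈ (0,1), uniform restart vector v = (1/3,1/3,1/3), groups {1} and {2,3}, there exist row-stochastic matrices P₁, P₂ and targets φ with L(P₁) = L(P₂) = 0 but L((P₁+P₂)/2) > 0. -/
open Matrix BigOperators

lemma aux_inv_mulVec {A : Matrix (Fin 3) (Fin 3) ℝ} (hA : IsUnit A.det)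
    {w v : Fin 3 → ℝ} (h : A *ᵥ w = v) : A⁻¹ *ᵥ v = w := by
  rw [← h, Matrix.mulVec_mulVec, Matrix.nonsing_inv_mul A hA, Matrix.one_mulVec]

set_option maxHeartbeats 1600000

/-- The fairness loss `L(P) = (1/K) Σₖ (1ₖᵀ p(P) - φₖ)²` is not convex in `P`:
for `n = 3`, any `γ ∈ (0,1)`, uniform restart vector, groups `{1}` and `{2,3}`, the
concrete row-stochastic matrices `P₁, P₂` and targets `φ` below satisfy
`L(P₁) = L(P₂) = 0` but `L((P₁+P₂)/2) > 0`, contradicting convexity. -/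
theorem fairness_loss_not_convex (γ : ℝ) (hγ0 : 0 < γ) (hγ1 : γ < 1) :
    let v : Fin 3 → ℝ := fun _ => 1 / 3
    let pr : Matrix (Fin 3) (Fin 3) ℝ → (Fin 3 → ℝ) :=
      fun P => γ • ((1 - (1 - γ) • Pᵀ)⁻¹ *ᵥ v)
    let c1 : Fin 3 → ℝ := ![1, 0, 0]
    let c2 : Fin 3 → ℝ := ![0, 1, 1]
    let φ1 : ℝ := (γ ^ 2 - 3 * γ + 3) / (3 * (2 - γ))
    let φ2 : ℝ := 1 - φ1
    let L : Matrix (Fin 3) (Fin 3) ℝ → ℝ :=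
      fun P => (1 / 2) * ((c1 ⬝ᵥ pr P - φ1) ^ 2 + (c2 ⬝ᵥ pr P - φ2) ^ 2)
    let P1 : Matrix (Fin 3) (Fin 3) ℝ := !![0, 1, 0; 1, 0, 0; 0, 1, 0]
    let P2 : Matrix (Fin 3) (Fin 3) ℝ := !![0, 0, 1; 0, 0, 1; 1, 0, 0]
    L P1 = 0 ∧ L P2 = 0 ∧ 0 < L ((1 / 2 : ℝ) • (P1 + P2)) := by
  intro v pr c1 c2 φ1 φ2 L P1 P2
  have h2γ : (0:ℝ) < 2 - γ := by linarith
  have hγne : γ ≠ 0 := ne_of_gt hγ0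
  have hd : (0:ℝ) < γ * (2 - γ) := by positivity
  set β : ℝ := 1 - γ with hβ
  have hβ0 : 0 < β := by simp only [hβ]; linarith
  have hβ1 : β < 1 := by simp only [hβ]; linarith
  have hT1 : P1ᵀ = !![0, 1, 0; 1, 0, 1; 0, 0, 0] := by
    apply Matrix.ext; intro i j; fin_cases i <;> fin_cases j <;> rfl
  have hT2 : P2ᵀ = !![0, 0, 1; 0, 0, 0; 1, 1, 0] := by
    apply Matrix.ext; intro i j; fin_cases i <;> fin_cases j <;> rfl
  have hTm : ((1 / 2 : ℝ) • (P1 + P2))ᵀ = !![0, 1/2, 1/2; 1/2, 0, 1/2; 1/2, 1/2, 0] := by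
    apply Matrix.ext; intro i j; fin_cases i <;> fin_cases j <;> norm_num [P1, P2]
  -- matrices
  have hA1 : (1 - (1 - γ) • P1ᵀ) = !![1, -β, 0; -β, 1, -β; 0, 0, 1] := by
    rw [hT1]
    apply Matrix.ext; intro i j
    fin_cases i <;> fin_cases j <;>
      simp [Matrix.one_apply, Matrix.vecHead, Matrix.vecTail, hβ] <;> ring
  have hA2 : (1 - (1 - γ) • P2ᵀ) = !![1, 0, -β; 0, 1, 0; -β, -β, 1] := by
    rw [hT2]
    apply Matrix.ext; intro i j
    fin_cases i <;> fin_cases j <;>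
      simp [Matrix.one_apply, Matrix.vecHead, Matrix.vecTail, hβ] <;> ring
  have hAm : (1 - (1 - γ) • ((1 / 2 : ℝ) • (P1 + P2))ᵀ) =
      !![1, -β/2, -β/2; -β/2, 1, -β/2; -β/2, -β/2, 1] := by
    rw [hTm]
    apply Matrix.ext; intro i j
    fin_cases i <;> fin_cases j <;>
      simp [Matrix.one_apply, Matrix.vecHead, Matrix.vecTail, hβ] <;> ring
  -- determinants
  have hdet1 : (!![1, -β, 0; -β, 1, -β; 0, 0, 1] : Matrix (Fin 3) (Fin 3) ℝ).det
      = 1 - β ^ 2 := by simp [Matrix.det_fin_three, Matrix.vecHead, Matrix.vecTail]; ring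
  have hdet2 : (!![1, 0, -β; 0, 1, 0; -β, -β, 1] : Matrix (Fin 3) (Fin 3) ℝ).det
      = 1 - β ^ 2 := by simp [Matrix.det_fin_three, Matrix.vecHead, Matrix.vecTail]; ring
  have hdetm : (!![1, -β/2, -β/2; -β/2, 1, -β/2; -β/2, -β/2, 1] :
      Matrix (Fin 3) (Fin 3) ℝ).det = 1 - 3 * (β/2)^2 - 2 * (β/2)^3 := by
    simp [Matrix.det_fin_three, Matrix.vecHead, Matrix.vecTail]; ring
  have hu1 : IsUnit (!![1, -β, 0; -β, 1, -β; 0, 0, 1] : Matrix (Fin 3) (Fin 3) ℝ).det := by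
    rw [hdet1, isUnit_iff_ne_zero]; nlinarith
  have hu2 : IsUnit (!![1, 0, -β; 0, 1, 0; -β, -β, 1] : Matrix (Fin 3) (Fin 3) ℝ).det := by
    rw [hdet2, isUnit_iff_ne_zero]; nlinarith
  have hum : IsUnit (!![1, -β/2, -β/2; -β/2, 1, -β/2; -β/2, -β/2, 1] :
      Matrix (Fin 3) (Fin 3) ℝ).det := by
    rw [hdetm, isUnit_iff_ne_zero]; nlinarith
  -- solutions
  have hw1 : pr P1 = γ • ![(3 - 3*γ + γ^2) / (3 * γ * (2 - γ)),
      (3 - 2*γ) / (3 * γ * (2 - γ)), 1/3] := by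
    show γ • _ = _
    rw [hA1]
    congr 1
    apply aux_inv_mulVec hu1
    funext i; fin_cases i <;>
      simp [Matrix.mulVec, dotProduct, Fin.sum_univ_three, Matrix.vecHead, Matrix.vecTail, v, hβ] <;>
      field_simp <;> ring
  have hw2 : pr P2 = γ • ![(3 - 3*γ + γ^2) / (3 * γ * (2 - γ)), 1/3,
      (3 - 2*γ) / (3 * γ * (2 - γ))] := by
    show γ • _ = _
    rw [hA2]
    congr 1
    apply aux_inv_mulVec hu2
    funext i; fin_cases i <;>
      simp [Matrix.mulVec, dotProduct, Fin.sum_univ_three, Matrix.vecHead, Matrix.vecTail, v, hβ] <;>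
      field_simp <;> ring
  have hwm : pr ((1 / 2 : ℝ) • (P1 + P2)) = γ • ![1/(3*γ), 1/(3*γ), 1/(3*γ)] := by
    show γ • _ = _
    rw [hAm]
    congr 1
    apply aux_inv_mulVec hum
    funext i; fin_cases i <;>
      simp [Matrix.mulVec, dotProduct, Fin.sum_univ_three, Matrix.vecHead, Matrix.vecTail, v, hβ] <;>
      field_simp <;> ring
  refine ⟨?_, ?_, ?_⟩
  · show (1/2 : ℝ) * ((c1 ⬝ᵥ pr P1 - φ1)^2 + (c2 ⬝ᵥ pr P1 - φ2)^2) = 0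
    rw [hw1]
    have d1 : c1 ⬝ᵥ (γ • ![(3 - 3*γ + γ^2) / (3 * γ * (2 - γ)),
        (3 - 2*γ) / (3 * γ * (2 - γ)), 1/3]) = φ1 := by
      simp only [c1, φ1, dotProduct, Fin.sum_univ_three, Pi.smul_apply,
        Matrix.cons_val_zero, Matrix.cons_val_one, Matrix.head_cons, smul_eq_mul,
        Matrix.cons_val_two, Matrix.tail_cons]
      field_simp
      ring
    have d2 : c2 ⬝ᵥ (γ • ![(3 - 3*γ + γ^2) / (3 * γ * (2 - γ)),
        (3 - 2*γ) / (3 * γ * (2 - γ)), 1/3]) = φ2 := by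
      simp only [c2, φ2, φ1, dotProduct, Fin.sum_univ_three, Pi.smul_apply,
        Matrix.cons_val_zero, Matrix.cons_val_one, Matrix.head_cons, smul_eq_mul,
        Matrix.cons_val_two, Matrix.tail_cons]
      field_simp
      ring
    rw [d1, d2]; ring
  · show (1/2 : ℝ) * ((c1 ⬝ᵥ pr P2 - φ1)^2 + (c2 ⬝ᵥ pr P2 - φ2)^2) = 0
    rw [hw2]
    have d1 : c1 ⬝ᵥ (γ • ![(3 - 3*γ + γ^2) / (3 * γ * (2 - γ)), 1/3,
        (3 - 2*γ) / (3 * γ * (2 - γ))]) = φ1 := by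
      simp only [c1, φ1, dotProduct, Fin.sum_univ_three, Pi.smul_apply,
        Matrix.cons_val_zero, Matrix.cons_val_one, Matrix.head_cons, smul_eq_mul,
        Matrix.cons_val_two, Matrix.tail_cons]
      field_simp
      ring
    have d2 : c2 ⬝ᵥ (γ • ![(3 - 3*γ + γ^2) / (3 * γ * (2 - γ)), 1/3,
        (3 - 2*γ) / (3 * γ * (2 - γ))]) = φ2 := by
      simp only [c2, φ2, φ1, dotProduct, Fin.sum_univ_three, Pi.smul_apply,
        Matrix.cons_val_zero, Matrix.cons_val_one, Matrix.head_cons, smul_eq_mul,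
        Matrix.cons_val_two, Matrix.tail_cons]
      field_simp
      ring
    rw [d1, d2]; ring
  · show (0:ℝ) < (1/2 : ℝ) * ((c1 ⬝ᵥ pr ((1 / 2 : ℝ) • (P1 + P2)) - φ1)^2 +
      (c2 ⬝ᵥ pr ((1 / 2 : ℝ) • (P1 + P2)) - φ2)^2)
    rw [hwm]
    have d1 : c1 ⬝ᵥ (γ • ![1/(3*γ), 1/(3*γ), 1/(3*γ)]) - φ1
        = -((1-γ)^2/(3*(2-γ))) := by
      simp only [c1, φ1, dotProduct, Fin.sum_univ_three, Pi.smul_apply,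
        Matrix.cons_val_zero, Matrix.cons_val_one, Matrix.head_cons, smul_eq_mul,
        Matrix.cons_val_two, Matrix.tail_cons]
      field_simp
      ring
    rw [d1]
    have h1 : (0:ℝ) < (-((1-γ)^2/(3*(2-γ))))^2 := by
      have hg : (0:ℝ) < 1 - γ := by linarith
      have hx : (0:ℝ) < (1-γ)^2/(3*(2-γ)) := div_pos (pow_pos hg 2) (by linarith)
      rw [neg_sq]
      exact pow_pos hx 2
    nlinarith [h1, sq_nonneg (c2 ⬝ᵥ (γ • ![1/(3*γ), 1/(3*γ), 1/(3*γ)]) - φ2)]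
end

section
/- Let s ∈ ℝ^N and let s* be the Euclidean projection of s onto the probability simplex {t ∈ ℝ^N : Σᵢ tᵢ = 1, tᵢ ≥ 0}. Rank the coordinates so s₁ ≥ ⋯ ≥ s_N, set k(s) = max{k : 1 + k·sₖ > Σ_{j≤k} sⱼ} and τ = (Σ_{j≤k(s)} sⱼ − 1)/k(s). Then s*ᵢ = max(0, sᵢ − τ) for every i. -/
open BigOperators

/-- Projection onto the probability simplex. If `s` is sorted nonincreasingly,
`k` is the largest index with `1 + (k+1)·s k > Σ_{j ≤ k} s j` (0-based indices), and
`τ = (Σ_{j ≤ k} s j - 1)/(k+1)`, then the vector `i ↦ max 0 (s i - τ)` is the Euclidean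
projection of `s` onto the probability simplex. -/
theorem simplex_projection_formula {N : ℕ} (s : Fin N → ℝ) (hs : Antitone s)
    (k : Fin N)
    (hk : 1 + (((k : ℕ) + 1 : ℕ) : ℝ) * s k > ∑ j ∈ Finset.Iic k, s j)
    (hkmax : ∀ k' : Fin N,
      1 + (((k' : ℕ) + 1 : ℕ) : ℝ) * s k' > ∑ j ∈ Finset.Iic k', s j → k' ≤ k) :
    let τ : ℝ := ((∑ j ∈ Finset.Iic k, s j) - 1) / (((k : ℕ) + 1 : ℕ) : ℝ)
    let t : Fin N → ℝ := fun i => max 0 (s i - τ)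
    (∀ i, 0 ≤ t i) ∧ (∑ i, t i = 1) ∧
      ∀ u : Fin N → ℝ, (∀ i, 0 ≤ u i) → ∑ i, u i = 1 →
        ∑ i, (s i - t i) ^ 2 ≤ ∑ i, (s i - u i) ^ 2 := by
  intro τ t
  have hKpos : (0:ℝ) < (((k : ℕ) + 1 : ℕ) : ℝ) := by positivity
  have hτmul : (((k : ℕ) + 1 : ℕ) : ℝ) * τ = (∑ j ∈ Finset.Iic k, s j) - 1 := by
    simp only [τ]
    field_simp
  -- τ < s k
  have hτk : τ < s k := by
    simp only [τ]
    rw [div_lt_iff₀ hKpos]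
    nlinarith [hk]
  -- for i ≤ k, t i = s i - τ
  have ht_le : ∀ i : Fin N, i ≤ k → t i = s i - τ := by
    intro i hi
    have : τ < s i := lt_of_lt_of_le hτk (hs hi)
    simp [t, max_eq_right (by linarith : (0:ℝ) ≤ s i - τ)]
  -- for i > k, s i ≤ τ
  have hsle : ∀ i : Fin N, k < i → s i ≤ τ := by
    intro i hi
    have hlt : (k : ℕ) + 1 < N := lt_of_le_of_lt (Nat.succ_le_of_lt hi) i.isLt
    set k1 : Fin N := ⟨(k : ℕ) + 1, hlt⟩ with hk1
    have hkk1 : k < k1 := by simp [Fin.lt_def, hk1]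
    have hfail : ¬ (1 + (((k1 : ℕ) + 1 : ℕ) : ℝ) * s k1 > ∑ j ∈ Finset.Iic k1, s j) := by
      intro h
      exact absurd (hkmax k1 h) (not_le_of_gt hkk1)
    have hins : Finset.Iic k1 = insert k1 (Finset.Iic k) := by
      ext j
      simp only [Finset.mem_Iic, Finset.mem_insert, Fin.le_def, Fin.ext_iff, hk1]
      omega
    have hnm : k1 ∉ Finset.Iic k := by simp [Finset.mem_Iic, not_le_of_gt hkk1]
    rw [hins, Finset.sum_insert hnm] at hfail
    push_neg at hfail
    have hk1c : (((k1 : ℕ) + 1 : ℕ) : ℝ) = (((k : ℕ) + 1 : ℕ) : ℝ) + 1 := by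
      simp only [hk1]; push_cast; ring
    rw [hk1c] at hfail
    have hsk1 : s k1 ≤ τ := by
      rw [← mul_le_mul_iff_right₀ hKpos, hτmul]
      nlinarith [hfail]
    have hk1le : k1 ≤ i := by
      simp only [Fin.le_def, Fin.lt_def, hk1] at hi ⊢; omega
    exact le_trans (hs hk1le) hsk1
  have ht0 : ∀ i : Fin N, ¬ i ≤ k → t i = 0 := by
    intro i hi
    have := hsle i (lt_of_not_ge hi)
    simp [t, max_eq_left (by linarith : s i - τ ≤ 0)]
  have hcard : (Finset.Iic k).card = (k : ℕ) + 1 := Fin.card_Iic k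
  have hnonneg : ∀ i, 0 ≤ t i := fun i => le_max_left _ _
  -- sum over Iic k of t = 1
  have hsumA : ∑ i ∈ Finset.Iic k, t i = 1 := by
    rw [Finset.sum_congr rfl (fun i hi => ht_le i (Finset.mem_Iic.mp hi))]
    rw [Finset.sum_sub_distrib, Finset.sum_const, hcard, nsmul_eq_mul]
    rw [show ((((k:ℕ)+1 : ℕ)) : ℝ) * τ = (∑ j ∈ Finset.Iic k, s j) - 1 from by push_cast at hτmul ⊢; linarith [hτmul]]
    ring
  have hsum : ∑ i, t i = 1 := by
    rw [← Finset.sum_add_sum_compl (Finset.Iic k) t, hsumA]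
    have : ∑ i ∈ (Finset.Iic k)ᶜ, t i = 0 := by
      apply Finset.sum_eq_zero
      intro i hi
      exact ht0 i (by simpa [Finset.mem_compl, Finset.mem_Iic] using hi)
    rw [this]; ring
  refine ⟨hnonneg, hsum, ?_⟩
  intro u hu hsu
  -- cross term
  have hsplitu : ∑ i ∈ Finset.Iic k, u i + ∑ i ∈ (Finset.Iic k)ᶜ, u i = 1 := by
    rw [Finset.sum_add_sum_compl, hsu]
  have hcross : 0 ≤ ∑ i, (s i - t i) * (t i - u i) := by
    rw [← Finset.sum_add_sum_compl (Finset.Iic k)]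
    have hA : ∑ i ∈ Finset.Iic k, (s i - t i) * (t i - u i)
        = τ * (1 - ∑ i ∈ Finset.Iic k, u i) := by
      rw [Finset.sum_congr rfl (fun i hi => by
        rw [ht_le i (Finset.mem_Iic.mp hi)]; ring_nf :
        ∀ i ∈ Finset.Iic k, (s i - t i) * (t i - u i) = τ * (t i - u i))]
      rw [← Finset.mul_sum, Finset.sum_sub_distrib, hsumA]
    have hB : ∑ i ∈ (Finset.Iic k)ᶜ, (s i - t i) * (t i - u i)
        = ∑ i ∈ (Finset.Iic k)ᶜ, (- (s i * u i)) := by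
      apply Finset.sum_congr rfl
      intro i hi
      rw [ht0 i (by simpa [Finset.mem_compl, Finset.mem_Iic] using hi)]
      ring
    rw [hA, hB]
    have h1 : 1 - ∑ i ∈ Finset.Iic k, u i = ∑ i ∈ (Finset.Iic k)ᶜ, u i := by linarith
    rw [h1, Finset.mul_sum, ← Finset.sum_add_distrib]
    apply Finset.sum_nonneg
    intro i hi
    have hik : ¬ i ≤ k := by simpa [Finset.mem_compl, Finset.mem_Iic] using hi
    have := hsle i (lt_of_not_ge hik)
    have hui := hu i
    nlinarith
  have hsq : 0 ≤ ∑ i, (t i - u i) ^ 2 := Finset.sum_nonneg fun i _ => sq_nonneg _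
  have hid : ∑ i, (s i - u i) ^ 2
      = ∑ i, (s i - t i) ^ 2 + 2 * ∑ i, (s i - t i) * (t i - u i)
        + ∑ i, (t i - u i) ^ 2 := by
    rw [Finset.mul_sum, ← Finset.sum_add_distrib, ← Finset.sum_add_distrib]
    apply Finset.sum_congr rfl
    intro i _
    ring
  linarith
end

section
/- Let ℓ, u ∈ ℝ^N with ℓᵢ ≤ uᵢ, and suppose the set F = {t ∈ ℝ^N : Σᵢ tᵢ = 1, ℓᵢ ≤ tᵢ ≤ uᵢ} is nonempty. For s ∈ ℝ^N, the Euclidean projection of s onto F is given coordinatewise by s*ᵢ = clip(sᵢ + λ*, ℓᵢ, uᵢ), where λ* ∈ ℝ is any solution of h(λ) := Σᵢ clip(sᵢ + λ, ℓᵢ, uᵢ) − 1 = 0, and such a root exists. -/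
open BigOperators

/-- `clip x a b` equals `a` if `x ≤ a`, `x` if `a < x < b`, and `b` if `x ≥ b`
(for `a ≤ b`). -/
def clip (x a b : ℝ) : ℝ := min (max x a) b

lemma clip_mem (x a b : ℝ) (hab : a ≤ b) : a ≤ clip x a b ∧ clip x a b ≤ b := by
  constructor
  · exact le_min (le_max_right x a) hab
  · exact min_le_right _ _

lemma clip_key (x a b t : ℝ) (hab : a ≤ b) (ht : a ≤ t ∧ t ≤ b) :
    0 ≤ (x - clip x a b) * (clip x a b - t) := by
  unfold clip
  rcases le_total x a with h | h
  · rw [max_eq_right h, min_eq_left hab]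
    nlinarith [ht.1]
  · rw [max_eq_left h]
    rcases le_total x b with h2 | h2
    · rw [min_eq_left h2]; simp
    · rw [min_eq_right h2]
      exact mul_nonneg (by linarith) (by linarith [ht.2])

/-- Projection onto the intersection of the probability simplex and a box.
If `F = {t : Σ tᵢ = 1, ℓᵢ ≤ tᵢ ≤ uᵢ}` is nonempty, then a root `λ*` of
`h(λ) = Σᵢ clip(sᵢ + λ, ℓᵢ, uᵢ) - 1` exists, and for any such root the vector
`i ↦ clip(sᵢ + λ*, ℓᵢ, uᵢ)` is the Euclidean projection of `s` onto `F`. -/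
theorem simplex_box_projection_formula {N : ℕ} (s ℓ u : Fin N → ℝ)
    (hlu : ∀ i, ℓ i ≤ u i)
    (hF : ∃ t : Fin N → ℝ, (∑ i, t i = 1) ∧ ∀ i, ℓ i ≤ t i ∧ t i ≤ u i) :
    (∃ lam : ℝ, ∑ i, clip (s i + lam) (ℓ i) (u i) = 1) ∧
    ∀ lam : ℝ, (∑ i, clip (s i + lam) (ℓ i) (u i) = 1) →
      (∀ i, ℓ i ≤ clip (s i + lam) (ℓ i) (u i) ∧ clip (s i + lam) (ℓ i) (u i) ≤ u i) ∧
      ∀ t : Fin N → ℝ, (∑ i, t i = 1) → (∀ i, ℓ i ≤ t i ∧ t i ≤ u i) →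
        ∑ i, (s i - clip (s i + lam) (ℓ i) (u i)) ^ 2 ≤ ∑ i, (s i - t i) ^ 2 := by
  obtain ⟨t0, ht0sum, ht0mem⟩ := hF
  constructor
  · -- existence of a root
    rcases Nat.eq_zero_or_pos N with hN | hN
    · subst hN
      simp at ht0sum
    have hne : (Finset.univ : Finset (Fin N)).Nonempty := ⟨⟨0, hN⟩, Finset.mem_univ _⟩
    set lam0 := Finset.univ.inf' hne (fun i => ℓ i - s i) with hlam0
    set lam1 := Finset.univ.sup' hne (fun i => u i - s i) with hlam1
    have hle : lam0 ≤ lam1 := by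
      obtain ⟨j, _, hj⟩ := Finset.exists_mem_eq_inf' hne (fun i => ℓ i - s i)
      calc lam0 = ℓ j - s j := hj
        _ ≤ u j - s j := by linarith [hlu j]
        _ ≤ lam1 := Finset.le_sup' (fun i => u i - s i) (Finset.mem_univ j)
    have hcont : ContinuousOn (fun lam => ∑ i, clip (s i + lam) (ℓ i) (u i))
        (Set.Icc lam0 lam1) := by
      apply Continuous.continuousOn
      apply continuous_finset_sum
      intro i _
      unfold clip
      fun_prop
    have hval0 : (fun lam => ∑ i, clip (s i + lam) (ℓ i) (u i)) lam0 = ∑ i, ℓ i := by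
      apply Finset.sum_congr rfl
      intro i _
      have : s i + lam0 ≤ ℓ i := by
        have := Finset.inf'_le (fun i => ℓ i - s i) (Finset.mem_univ i)
        linarith [this]
      unfold clip
      rw [max_eq_right this, min_eq_left (hlu i)]
    have hval1 : (fun lam => ∑ i, clip (s i + lam) (ℓ i) (u i)) lam1 = ∑ i, u i := by
      apply Finset.sum_congr rfl
      intro i _
      have : u i ≤ s i + lam1 := by
        have := Finset.le_sup' (fun i => u i - s i) (Finset.mem_univ i)
        linarith [this]
      unfold clip
      rw [max_eq_left (by linarith [hlu i]), min_eq_right this]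
    have hmem : (1 : ℝ) ∈ Set.Icc ((fun lam => ∑ i, clip (s i + lam) (ℓ i) (u i)) lam0)
        ((fun lam => ∑ i, clip (s i + lam) (ℓ i) (u i)) lam1) := by
      rw [hval0, hval1]
      constructor
      · rw [← ht0sum]; exact Finset.sum_le_sum (fun i _ => (ht0mem i).1)
      · rw [← ht0sum]; exact Finset.sum_le_sum (fun i _ => (ht0mem i).2)
    obtain ⟨lam, _, hlam⟩ := intermediate_value_Icc hle hcont hmem
    exact ⟨lam, hlam⟩
  · intro lam hroot
    refine ⟨fun i => clip_mem _ _ _ (hlu i), ?_⟩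
    intro t htsum htmem
    set p := fun i => clip (s i + lam) (ℓ i) (u i) with hp
    have key : 0 ≤ ∑ i, (s i - p i) * (p i - t i) := by
      have h1 : ∀ i ∈ Finset.univ, 0 ≤ (s i + lam - p i) * (p i - t i) :=
        fun i _ => clip_key (s i + lam) (ℓ i) (u i) (t i) (hlu i) (htmem i)
      have h2 : (0:ℝ) ≤ ∑ i, (s i + lam - p i) * (p i - t i) := Finset.sum_nonneg h1
      have h3 : ∑ i, (s i + lam - p i) * (p i - t i)
          = ∑ i, (s i - p i) * (p i - t i) + lam * (∑ i, p i - ∑ i, t i) := by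
        rw [← Finset.sum_sub_distrib, Finset.mul_sum, ← Finset.sum_add_distrib]
        apply Finset.sum_congr rfl
        intro i _
        ring
      rw [h3, hroot, htsum] at h2
      simpa using h2
    have expand : ∑ i, (s i - t i) ^ 2
        = ∑ i, (s i - p i) ^ 2 + ∑ i, (p i - t i) ^ 2
          + 2 * ∑ i, (s i - p i) * (p i - t i) := by
      rw [Finset.mul_sum, ← Finset.sum_add_distrib, ← Finset.sum_add_distrib]
      apply Finset.sum_congr rfl
      intro i _
      ring
    have sq_nonneg' : (0:ℝ) ≤ ∑ i, (p i - t i) ^ 2 :=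
      Finset.sum_nonneg (fun i _ => sq_nonneg _)
    linarith [expand]
end
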